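/- Let G=(V,E) be a finite connected undirected graph with positive conductances and marked vertex b, and let z₀≠b be a vertex. Under the probability measure on two-component spanning forests proportional to weight, conditioned on the event that z₀ lies in the floating component Σ, the conditional expected number of vertices of Σ equals Σ_{v∈V} G_{v,z₀} / G_{z₀,z₀}. -/

import Mathlib

set_option linter.unusedSectionVars false
set_option linter.unusedVariables false
set_option maxHeartbeats 1000000


open scoped Classical BigOperators

noncomputable section

namespace TwoSF

variable {V : Type*} [Fintype V] [DecidableEq V]

/-- `u` and `v` are linked by the edges in `B`. -/
def Linked (B : Finset (Sym2 V)) : V → V → Prop :=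
  Relation.ReflTransGen fun a b => s(a, b) ∈ B

/-- The number of connected components of the spanning subgraph `(V, B)`. -/
def ncomp (B : Finset (Sym2 V)) : ℕ :=
  Nat.card (Quot (Linked B))

/-- `B` is a spanning forest of the complete graph on `V` with exactly `k`
connected components: it has `k` components and, by the rank count
`|B| + k = |V|`, it is acyclic (in particular it contains no loop edge).
Taking `k = 1` gives spanning trees, `k = 2` gives two-component spanning
forests (2SF). -/
def IsSF (k : ℕ) (B : Finset (Sym2 V)) : Prop :=
  ncomp B = k ∧ B.card + k = Fintype.card V

/-- The weight of an edge set: the product of its conductances. -/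
def wt (c : Sym2 V → ℝ) (B : Finset (Sym2 V)) : ℝ := ∏ e ∈ B, c e

/-- κ: the weighted sum of spanning trees.  Edge sets containing a non-edge
(an `e` with `c e = 0`) contribute weight `0`, so this is the weighted number
of spanning trees of the graph whose edges are the support of `c`. -/
def kappa1 (c : Sym2 V → ℝ) : ℝ := ∑ B ∈ Finset.univ.filter (IsSF 1), wt c B

/-- κ₂: the weighted sum of two-component spanning forests. -/
def kappa2 (c : Sym2 V → ℝ) : ℝ := ∑ B ∈ Finset.univ.filter (IsSF 2), wt c B

/-- The floating component of `B`: the set of vertices not linked to `b`. -/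
def floating (b : V) (B : Finset (Sym2 V)) : Finset V :=
  Finset.univ.filter fun v => ¬ Linked B b v

/-- The graph Laplacian `Δ` of the graph with conductances `c`. -/
def lap (c : Sym2 V → ℝ) : Matrix V V ℝ := fun u v =>
  if u = v then ∑ w ∈ Finset.univ.filter (· ≠ u), c s(u, w) else -c s(u, v)

/-- The Dirichlet Laplacian `Δ_D`, indexed by `V \ {b}`. -/
def dlap (c : Sym2 V → ℝ) (b : V) : Matrix {w : V // w ≠ b} {w : V // w ≠ b} ℝ :=
  Matrix.of fun p q => lap c p.1 q.1

/-- The Green function with Dirichlet boundary condition at `b` (the inverse of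
the Dirichlet Laplacian), with the convention that it vanishes as soon as one
of its arguments is `b`. -/
def green (c : Sym2 V → ℝ) (b : V) (u v : V) : ℝ :=
  if hu : u = b then 0 else if hv : v = b then 0 else (dlap c b)⁻¹ ⟨u, hu⟩ ⟨v, hv⟩

/-- The probability of the event `p` under the probability measure on
two-component spanning forests assigning to each 2SF a probability
proportional to its weight. -/
def pr2 (c : Sym2 V → ℝ) (p : Finset (Sym2 V) → Prop) : ℝ :=
  (∑ B ∈ Finset.univ.filter (fun B => IsSF 2 B ∧ p B), wt c B) / kappa2 c

/-- The expectation of `((floating b B).card : ℝ) ^ k`, i.e. of `|Σ|^k`, under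
the probability measure on two-component spanning forests proportional to
weight. -/
def expPow (c : Sym2 V → ℝ) (b : V) (k : ℕ) : ℝ :=
  (∑ B ∈ Finset.univ.filter (IsSF 2), wt c B * ((floating b B).card : ℝ) ^ k) / kappa2 c

/-- `|∂Σ|`: the sum of the conductances of the edges having exactly one
endpoint in the floating component of `B`. -/
def bdryWt (c : Sym2 V → ℝ) (b : V) (B : Finset (Sym2 V)) : ℝ :=
  ∑ u ∈ floating b B, ∑ v ∈ (floating b B)ᶜ, c s(u, v)

/-- The expectation of `|∂Σ|` under the probability measure on two-component
spanning forests proportional to weight. -/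
def expBdry (c : Sym2 V → ℝ) (b : V) : ℝ :=
  (∑ B ∈ Finset.univ.filter (IsSF 2), wt c B * bdryWt c b B) / kappa2 c

namespace SFProof
open Matrix

theorem linked_refl (B : Finset (Sym2 V)) (u : V) : Linked B u u := Relation.ReflTransGen.refl

theorem linked_symm {B : Finset (Sym2 V)} {u v : V} (h : Linked B u v) : Linked B v u :=
  (@Relation.ReflTransGen.symmetric _ _ ⟨fun a b hab => by rwa [Sym2.eq_swap] at hab⟩).symm _ _ h

theorem linked_trans {B : Finset (Sym2 V)} {u v w : V} (h : Linked B u v) (h' : Linked B v w) :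
    Linked B u w := Relation.ReflTransGen.trans h h'

theorem linked_mono {B B' : Finset (Sym2 V)} (hBB : B ⊆ B') {u v : V} (h : Linked B u v) :
    Linked B' u v := Relation.ReflTransGen.mono (fun a b hab => hBB hab) _ _ h

theorem linked_edge {B : Finset (Sym2 V)} {u v : V} (h : s(u, v) ∈ B) : Linked B u v :=
  Relation.ReflTransGen.single h

theorem linked_equivalence (B : Finset (Sym2 V)) : Equivalence (Linked B) :=
  ⟨linked_refl B, linked_symm, linked_trans⟩

theorem quot_mk_eq_iff (B : Finset (Sym2 V)) (u v : V) :
    Quot.mk (Linked B) u = Quot.mk (Linked B) v ↔ Linked B u v := by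
  rw [Quot.eq]
  exact (linked_equivalence B).eqvGen_iff

instance quot_finite (B : Finset (Sym2 V)) : Finite (Quot (Linked B)) :=
  Finite.of_surjective (Quot.mk (Linked B)) (Quot.mk_surjective)

theorem linked_insert_iff {B : Finset (Sym2 V)} {x y u v : V} :
    Linked (insert s(x, y) B) u v ↔
      Linked B u v ∨ (Linked B u x ∧ Linked B y v) ∨ (Linked B u y ∧ Linked B x v) := by
  constructor
  · intro h
    induction h with
    | refl => exact Or.inl (linked_refl B u)
    | @tail m c hum hstep ih =>
      rcases Finset.mem_insert.1 hstep with he | hB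
      · rcases Sym2.eq_iff.mp he with ⟨hm, hc⟩ | ⟨hm, hc⟩
        · subst hm; subst hc
          rcases ih with h1 | ⟨h2, _⟩ | ⟨h3, _⟩
          · exact Or.inr (Or.inl ⟨h1, linked_refl B _⟩)
          · exact Or.inr (Or.inl ⟨h2, linked_refl B _⟩)
          · exact Or.inl h3
        · subst hm; subst hc
          rcases ih with h1 | ⟨h2, _⟩ | ⟨h3, _⟩
          · exact Or.inr (Or.inr ⟨h1, linked_refl B _⟩)
          · exact Or.inl h2
          · exact Or.inr (Or.inr ⟨h3, linked_refl B _⟩)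
      · rcases ih with h1 | ⟨h2, h4⟩ | ⟨h3, h4⟩
        · exact Or.inl (linked_trans h1 (linked_edge hB))
        · exact Or.inr (Or.inl ⟨h2, linked_trans h4 (linked_edge hB)⟩)
        · exact Or.inr (Or.inr ⟨h3, linked_trans h4 (linked_edge hB)⟩)
  · intro h
    have hsub : B ⊆ insert s(x, y) B := Finset.subset_insert _ _
    have hedge : Linked (insert s(x, y) B) x y :=
      linked_edge (Finset.mem_insert_self _ _)
    rcases h with h1 | ⟨h2, h4⟩ | ⟨h3, h4⟩
    · exact linked_mono hsub h1
    · exact ((linked_mono hsub h2).trans hedge).trans (linked_mono hsub h4)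
    · exact ((linked_mono hsub h3).trans (linked_symm hedge)).trans (linked_mono hsub h4)



theorem linked_empty_iff {u v : V} : Linked (∅ : Finset (Sym2 V)) u v ↔ u = v := by
  constructor
  · intro h
    induction h with
    | refl => rfl
    | tail _ hstep ih => exact absurd hstep (Finset.notMem_empty _)
  · rintro rfl; exact linked_refl _ _

theorem ncomp_empty : ncomp (∅ : Finset (Sym2 V)) = Fintype.card V := by
  rw [ncomp, ← Nat.card_eq_fintype_card]
  refine (Nat.card_eq_of_bijective (Quot.mk _) ⟨fun a b hab => ?_, Quot.mk_surjective⟩).symm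
  exact (linked_empty_iff.mp ((quot_mk_eq_iff _ _ _).mp hab))

theorem ncomp_congr {B B' : Finset (Sym2 V)} (h : ∀ u v, Linked B u v ↔ Linked B' u v) :
    ncomp B = ncomp B' := by
  have : Linked B = Linked B' := by
    funext u v; exact propext (h u v)
  rw [ncomp, ncomp, this]

theorem ncomp_insert_of_linked {B : Finset (Sym2 V)} {x y : V} (h : Linked B x y) :
    ncomp (insert s(x, y) B) = ncomp B := by
  refine ncomp_congr fun u v => ?_
  rw [linked_insert_iff]
  constructor
  · rintro (h1 | ⟨h2, h4⟩ | ⟨h3, h4⟩)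
    · exact h1
    · exact (h2.trans h).trans h4
    · exact (h3.trans (linked_symm h)).trans h4
  · exact Or.inl

theorem ncomp_insert_of_not_linked {B : Finset (Sym2 V)} {x y : V} (h : ¬ Linked B x y) :
    ncomp B = ncomp (insert s(x, y) B) + 1 := by
  set B' := insert s(x, y) B with hB'
  have hxy' : Linked B' x y := linked_edge (Finset.mem_insert_self _ _)
  -- map to Option (Quot (Linked B'))
  let g : V → Option (Quot (Linked B')) := fun u =>
    if Linked B u y then none else some (Quot.mk _ u)
  have hwd : ∀ u u', Linked B u u' → g u = g u' := by
    intro u u' huu'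
    by_cases h1 : Linked B u y
    · have h2 : Linked B u' y := (linked_symm huu').trans h1
      simp [g, h1, h2]
    · have h2 : ¬ Linked B u' y := fun hc => h1 (huu'.trans hc)
      simp only [g, if_neg h1, if_neg h2]
      exact congrArg some ((quot_mk_eq_iff _ _ _).mpr (linked_mono (Finset.subset_insert _ _) huu'))
  let gq : Quot (Linked B) → Option (Quot (Linked B')) := Quot.lift g hwd
  have hbij : Function.Bijective gq := by
    constructor
    · intro q q'
      induction q using Quot.ind
      induction q' using Quot.ind
      rename_i u u'
      intro heq
      simp only [gq, Quot.lift_mk] at heq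
      by_cases h1 : Linked B u y <;> by_cases h2 : Linked B u' y <;>
        simp only [g, if_pos, if_neg, h1, h2, if_true, if_false] at heq
      · exact (quot_mk_eq_iff _ _ _).mpr (h1.trans (linked_symm h2))
      · exact absurd heq (by simp)
      · exact absurd heq (by simp)
      · have : Linked B' u u' := (quot_mk_eq_iff _ _ _).mp (Option.some_injective _ heq)
        rw [linked_insert_iff] at this
        rcases this with h3 | ⟨h4, h5⟩ | ⟨h6, _⟩
        · exact (quot_mk_eq_iff _ _ _).mpr h3
        · exact absurd (linked_symm h5) h2
        · exact absurd h6 h1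
    · intro o
      rcases o with _ | q
      · exact ⟨Quot.mk _ y, by simp [gq, g, linked_refl]⟩
      · induction q using Quot.ind
        rename_i u
        by_cases h1 : Linked B u y
        · refine ⟨Quot.mk _ x, ?_⟩
          simp only [gq, Quot.lift_mk, g, if_neg h]
          exact congrArg some ((quot_mk_eq_iff _ _ _).mpr
            (linked_symm ((linked_mono (Finset.subset_insert _ _) h1).trans (linked_symm hxy'))))
        · exact ⟨Quot.mk _ u, by simp [gq, g, h1]⟩
  have := Nat.card_congr (Equiv.ofBijective gq hbij)
  rw [ncomp, ncomp, this]
  haveI : Finite (Quot (Linked B')) := quot_finite _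
  haveI := Fintype.ofFinite (Quot (Linked B'))
  simp [Nat.card_eq_fintype_card]

theorem subforest (B : Finset (Sym2 V)) :
    ∃ B' ⊆ B, (B'.card + ncomp B' = Fintype.card V) ∧
      ∀ u v, Linked B' u v ↔ Linked B u v := by
  induction B using Finset.induction_on with
  | empty =>
    exact ⟨∅, Finset.Subset.refl _, by simp [ncomp_empty], fun u v => Iff.rfl⟩
  | @insert e B heB ih =>
    obtain ⟨B', hsub, hcount, hiff⟩ := ih
    induction e using Sym2.ind with
    | _ x y =>
    by_cases hxy : Linked B' x y
    · refine ⟨B', hsub.trans (Finset.subset_insert _ _), hcount, fun u v => ?_⟩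
      constructor
      · intro h
        exact linked_mono (Finset.subset_insert _ _) ((hiff u v).mp h)
      · intro h
        rw [linked_insert_iff] at h
        rcases h with h1 | ⟨h2, h4⟩ | ⟨h3, h4⟩
        · exact (hiff u v).mpr h1
        · exact (((hiff u x).mpr h2).trans hxy).trans ((hiff y v).mpr h4)
        · exact (((hiff u y).mpr h3).trans (linked_symm hxy)).trans ((hiff x v).mpr h4)
    · have hxyB' : s(x, y) ∉ B' := fun hc => hxy (linked_edge hc)
      refine ⟨insert s(x, y) B', Finset.insert_subset_insert _ hsub, ?_, fun u v => ?_⟩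
      · rw [Finset.card_insert_of_notMem hxyB']
        have := ncomp_insert_of_not_linked hxy
        omega
      · rw [linked_insert_iff, linked_insert_iff, hiff u v, hiff u x, hiff y v, hiff u y,
          hiff x v]

theorem rank_le (B : Finset (Sym2 V)) : Fintype.card V ≤ B.card + ncomp B := by
  obtain ⟨B', hsub, hcount, hiff⟩ := subforest B
  have h1 : ncomp B' = ncomp B := ncomp_congr hiff
  have h2 : B'.card ≤ B.card := Finset.card_le_card hsub
  omega

theorem erase_forest {B : Finset (Sym2 V)} (hB : B.card + ncomp B = Fintype.card V)
    {x y : V} (he : s(x, y) ∈ B) :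
    ¬ Linked (B.erase s(x, y)) x y ∧
      (B.erase s(x, y)).card + ncomp (B.erase s(x, y)) = Fintype.card V ∧
      ncomp (B.erase s(x, y)) = ncomp B + 1 := by
  set C := B.erase s(x, y) with hC
  have hins : insert s(x, y) C = B := Finset.insert_erase he
  have hcardC : C.card + 1 = B.card := by
    rw [hC, Finset.card_erase_of_mem he]
    have : 1 ≤ B.card := Finset.card_pos.mpr ⟨_, he⟩
    omega
  have hnl : ¬ Linked C x y := by
    intro hl
    have h1 : ncomp (insert s(x, y) C) = ncomp C := ncomp_insert_of_linked hl
    rw [hins] at h1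
    have := rank_le C
    omega
  have h2 := ncomp_insert_of_not_linked hnl
  rw [hins] at h2
  exact ⟨hnl, by omega, by omega⟩



theorem linked_of_ncomp_one {B : Finset (Sym2 V)} (h : ncomp B = 1) (u v : V) :
    Linked B u v := by
  rw [ncomp, Nat.card_eq_one_iff_unique] at h
  exact (quot_mk_eq_iff _ _ _).mp (h.1.elim (Quot.mk _ u) (Quot.mk _ v))

theorem dichotomy {B : Finset (Sym2 V)} (hB : ncomp B = 2) {x y : V}
    (h : ¬ Linked B x y) (u : V) : Linked B u x ∨ Linked B u y := by
  rw [ncomp, Nat.card_eq_two_iff] at hB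
  obtain ⟨a, b', hab, huniv⟩ := hB
  have hmem : ∀ q : Quot (Linked B), q = a ∨ q = b' := by
    intro q
    have : q ∈ ({a, b'} : Set (Quot (Linked B))) := huniv ▸ Set.mem_univ q
    simpa using this
  have hxy : (Quot.mk (Linked B) x) ≠ (Quot.mk (Linked B) y) := by
    intro hc; exact h ((quot_mk_eq_iff _ _ _).mp hc)
  have key : ∀ q : Quot (Linked B), q = Quot.mk _ x ∨ q = Quot.mk _ y := by
    intro q
    rcases hmem (Quot.mk (Linked B) x) with hx | hx <;>
      rcases hmem (Quot.mk (Linked B) y) with hy | hy <;>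
        rcases hmem q with hq | hq <;>
          first
            | (left; rw [hq, ← hx])
            | (right; rw [hq, ← hy])
            | (exact absurd (hx.trans hy.symm) hxy)
  rcases key (Quot.mk (Linked B) u) with hq | hq
  · exact Or.inl ((quot_mk_eq_iff _ _ _).mp hq)
  · exact Or.inr ((quot_mk_eq_iff _ _ _).mp hq)

theorem not_linked_both {B : Finset (Sym2 V)} {x y u : V} (h : ¬ Linked B x y)
    (h1 : Linked B u x) (h2 : Linked B u y) : False :=
  h ((linked_symm h1).trans h2)

theorem insert_2sf {B : Finset (Sym2 V)} (hB : IsSF 2 B) {x y : V} (h : ¬ Linked B x y) :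
    IsSF 1 (insert s(x, y) B) := by
  obtain ⟨hn, hc⟩ := hB
  have hne : s(x, y) ∉ B := fun hc' => h (linked_edge hc')
  have h2 := ncomp_insert_of_not_linked h
  constructor
  · omega
  · rw [Finset.card_insert_of_notMem hne]; omega

theorem erase_sf {k : ℕ} {T : Finset (Sym2 V)} (hT : IsSF k T) {x y : V} (he : s(x, y) ∈ T) :
    IsSF (k + 1) (T.erase s(x, y)) ∧ ¬ Linked (T.erase s(x, y)) x y := by
  obtain ⟨hn, hc⟩ := hT
  obtain ⟨h1, h2, h3⟩ := erase_forest (by omega) he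
  refine ⟨⟨by omega, by omega⟩, h1⟩

theorem sep_unique {T : Finset (Sym2 V)} (hT : IsSF 1 T) {v t : V} {w w' : V}
    (hw : s(v, w) ∈ T) (hw' : s(v, w') ∈ T) (hne : s(v, w) ≠ s(v, w'))
    (h1 : ¬ Linked (T.erase s(v, w)) v t) (h2 : ¬ Linked (T.erase s(v, w')) v t) : False := by
  have hforest : T.card + ncomp T = Fintype.card V := by obtain ⟨a, b⟩ := hT; omega
  set f := s(v, w) with hf
  set f' := s(v, w') with hf'
  have hw'e : f' ∈ T.erase f := Finset.mem_erase.mpr ⟨Ne.symm hne, hw'⟩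
  have hwe : f ∈ T.erase f' := Finset.mem_erase.mpr ⟨hne, hw⟩
  have hTf := erase_forest hforest hw
  have hTf' := erase_forest hforest hw'
  -- C := (T.erase f).erase f'
  set C := (T.erase f).erase f' with hC
  have hCvw' : ¬ Linked C v w' := (erase_forest hTf.2.1 hw'e).1
  have hCvw : ¬ Linked C v w := by
    have h0 : ¬ Linked ((T.erase f').erase f) v w := (erase_forest hTf'.2.1 hwe).1
    rwa [hC, Finset.erase_right_comm]
  have hCsub : C ⊆ T.erase f := Finset.erase_subset _ _
  have hCsub' : C ⊆ T.erase f' := by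
    rw [hC, Finset.erase_right_comm]; exact Finset.erase_subset _ _
  have hvt : Linked T v t := linked_of_ncomp_one hT.1 v t
  -- step 1
  have hTdec : T = insert f (T.erase f) := (Finset.insert_erase hw).symm
  rw [hTdec, hf] at hvt
  rw [linked_insert_iff] at hvt
  have hwt : Linked (T.erase f) w t := by
    rcases hvt with hvt | ⟨_, hvt2⟩ | ⟨hvt1, _⟩
    · exact absurd hvt h1
    · exact hvt2
    · exact absurd hvt1 hTf.1
  -- step 2
  have hTfdec : T.erase f = insert f' C := (Finset.insert_erase hw'e).symm
  rw [hTfdec, hf'] at hwt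
  rw [linked_insert_iff] at hwt
  rcases hwt with hwt | ⟨hwt1, hwt2⟩ | ⟨hwt1, hwt2⟩
  · -- Linked C w t, so v -f- w - t in T.erase f'
    have : Linked (T.erase f') v t := by
      have hTf'dec : T.erase f' = insert f C := by
        rw [hC, Finset.erase_right_comm]
        exact (Finset.insert_erase hwe).symm
      rw [hTf'dec, hf, linked_insert_iff]
      exact Or.inr (Or.inl ⟨linked_refl _ _, hwt⟩)
    exact h2 this
  · exact hCvw (linked_symm hwt1)
  · exact h1 (linked_mono hCsub hwt2)

theorem sep_exists : ∀ n (B : Finset (Sym2 V)), B.card = n →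
    B.card + ncomp B = Fintype.card V → ∀ {v t : V}, Linked B v t → v ≠ t →
    ∃ w, s(v, w) ∈ B ∧ ¬ Linked (B.erase s(v, w)) v t := by
  intro n
  induction n using Nat.strong_induction_on with
  | _ n ih =>
    intro B hcard hforest v t hlink hvt
    rcases Relation.ReflTransGen.cases_head hlink with heq | ⟨w, hw, _⟩
    · exact absurd heq hvt
    · -- hw : s(v, w) ∈ B
      by_cases hsep : Linked (B.erase s(v, w)) v t
      · set f := s(v, w) with hf
        set B₁ := B.erase f with hB₁
        have hEF := erase_forest hforest hw
        have hcard₁ : B₁.card < n := by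
          rw [hB₁, Finset.card_erase_of_mem hw]
          have : 1 ≤ B.card := Finset.card_pos.mpr ⟨_, hw⟩
          omega
        obtain ⟨w', hw', hsep'⟩ := ih B₁.card hcard₁ B₁ rfl hEF.2.1 hsep hvt
        set f' := s(v, w') with hf'
        have hff' : f ≠ f' := fun hc => (Finset.mem_erase.mp (hc ▸ hw')).1.symm (by rw [hc])
        have hwB : f' ∈ B := Finset.mem_of_mem_erase hw'
        refine ⟨w', hwB, fun hL => ?_⟩
        set C := B₁.erase f' with hC
        have hCvt : ¬ Linked C v t := hsep'
        have hCvw' : ¬ Linked C v w' := (erase_forest hEF.2.1 hw').1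
        have hfC : f ∈ B.erase f' := Finset.mem_erase.mpr ⟨hff', hw⟩
        have hdec : B.erase f' = insert f C := by
          rw [hC, hB₁, Finset.erase_right_comm]
          exact (Finset.insert_erase hfC).symm
        -- decompose hL
        rw [hdec, hf, linked_insert_iff] at hL
        have hCwt : Linked C w t := by
          rcases hL with hL | ⟨_, hL2⟩ | ⟨hL1, hL2⟩
          · exact absurd hL hCvt
          · exact hL2
          · exact absurd hL2 hCvt
        -- decompose hsep : Linked B₁ v t with B₁ = insert f' C
        have hdec₁ : B₁ = insert f' C := (Finset.insert_erase hw').symm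
        rw [hdec₁, hf', linked_insert_iff] at hsep
        have hCw't : Linked C w' t := by
          rcases hsep with hs | ⟨_, hs2⟩ | ⟨hs1, _⟩
          · exact absurd hs hCvt
          · exact hs2
          · exact absurd hs1 hCvw'
        -- then Linked B₁ v w, contradicting erase_forest for B, f
        have : Linked B₁ v w := by
          rw [hdec₁, hf', linked_insert_iff]
          exact Or.inr (Or.inl ⟨linked_refl _ _, hCw't.trans (linked_symm hCwt)⟩)
        exact hEF.1 this
      · exact ⟨w, hw, hsep⟩

/-- indicator that `u` and `z0` are both in the floating (non-`b`) part. -/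
def phi (b z0 : V) (B : Finset (Sym2 V)) (u : V) : ℝ :=
  if ¬ Linked B b u ∧ ¬ Linked B b z0 then 1 else 0

theorem loopless {T : Finset (Sym2 V)} (hT : T.card + ncomp T = Fintype.card V) {v : V} :
    s(v, v) ∉ T := by
  intro hc
  exact (erase_forest hT hc).1 (linked_refl _ _)

theorem tree_sum {T : Finset (Sym2 V)} (hT : IsSF 1 T) {b z0 v : V} (hv : v ≠ b)
    (hzb : z0 ≠ b) :
    ∑ w ∈ Finset.univ.filter (fun w => w ≠ v ∧ s(v, w) ∈ T),
      (phi b z0 (T.erase s(v, w)) v - phi b z0 (T.erase s(v, w)) w) =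
      if v = z0 then (1 : ℝ) else 0 := by
  have hforest : T.card + ncomp T = Fintype.card V := by obtain ⟨a, b'⟩ := hT; omega
  set A := Finset.univ.filter (fun w => w ≠ v ∧ s(v, w) ∈ T) with hA
  have hmemA : ∀ w, w ∈ A ↔ (w ≠ v ∧ s(v, w) ∈ T) := by
    intro w; simp [hA]
  -- separating edge towards b
  obtain ⟨wb, hwbT, hwbsep⟩ :=
    sep_exists T.card T rfl hforest (linked_of_ncomp_one hT.1 v b) hv
  have hwbv : wb ≠ v := by
    rintro rfl
    exact loopless hforest hwbT
  have hwbA : wb ∈ A := (hmemA wb).mpr ⟨hwbv, hwbT⟩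
  have huniqb : ∀ w, w ∈ A → w ≠ wb → Linked (T.erase s(v, w)) v b := by
    intro w hwA hne
    by_contra hcon
    obtain ⟨hwv, hwT⟩ := (hmemA w).mp hwA
    refine sep_unique hT hwT hwbT (fun hc => ?_) hcon hwbsep
    rcases Sym2.eq_iff.mp hc with ⟨_, h2⟩ | ⟨_, h2⟩
    · exact hne h2
    · exact hwv h2
  -- dichotomy facts
  have hdich : ∀ w ∈ A, ∀ u, Linked (T.erase s(v, w)) u v ∨ Linked (T.erase s(v, w)) u w := by
    intro w hwA u
    obtain ⟨hwv, hwT⟩ := (hmemA w).mp hwA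
    obtain ⟨hsf2, hnl⟩ := erase_sf hT hwT
    exact dichotomy hsf2.1 hnl u
  have hnl : ∀ w ∈ A, ¬ Linked (T.erase s(v, w)) v w := by
    intro w hwA
    obtain ⟨hwv, hwT⟩ := (hmemA w).mp hwA
    exact (erase_sf hT hwT).2
  by_cases hvz : v = z0
  · -- v = z0
    subst hvz
    rw [if_pos rfl]
    have hterm : ∀ w ∈ A,
        phi b v (T.erase s(v, w)) v - phi b v (T.erase s(v, w)) w =
          if w = wb then (1 : ℝ) else 0 := by
      intro w hwA
      set L := Linked (T.erase s(v, w)) with hL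
      by_cases hwwb : w = wb
      · subst hwwb
        have h1 : ¬ L b v := fun hc => hwbsep (linked_symm hc)
        have h2 : L b w := (hdich w hwA b).resolve_left (fun hc => h1 hc)
        rw [if_pos rfl]
        simp only [phi, ← hL]
        rw [if_pos ⟨h1, h1⟩, if_neg (fun hc => hc.1 h2)]
        norm_num
      · have h1 : L b v := linked_symm (huniqb w hwA hwwb)
        rw [if_neg hwwb]
        simp only [phi, ← hL]
        rw [if_neg (fun hc => hc.1 h1), if_neg (fun hc => hc.2 h1)]
        norm_num
    rw [Finset.sum_congr rfl hterm, Finset.sum_ite_eq' A wb (fun _ => (1:ℝ)), if_pos hwbA]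
  · -- v ≠ z0
    rw [if_neg hvz]
    obtain ⟨wz, hwzT, hwzsep⟩ :=
      sep_exists T.card T rfl hforest (linked_of_ncomp_one hT.1 v z0) hvz
    have hwzv : wz ≠ v := by
      rintro rfl
      exact loopless hforest hwzT
    have hwzA : wz ∈ A := (hmemA wz).mpr ⟨hwzv, hwzT⟩
    have huniqz : ∀ w, w ∈ A → w ≠ wz → Linked (T.erase s(v, w)) v z0 := by
      intro w hwA hne
      by_contra hcon
      obtain ⟨hwv, hwT⟩ := (hmemA w).mp hwA
      refine sep_unique hT hwT hwzT (fun hc => ?_) hcon hwzsep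
      rcases Sym2.eq_iff.mp hc with ⟨_, h2⟩ | ⟨_, h2⟩
      · exact hne h2
      · exact hwv h2
    have hterm : ∀ w ∈ A,
        phi b z0 (T.erase s(v, w)) v - phi b z0 (T.erase s(v, w)) w =
          (if w = wb then (1 : ℝ) else 0) - (if w = wz then (1 : ℝ) else 0) := by
      intro w hwA
      set L := Linked (T.erase s(v, w)) with hL
      by_cases hwwb : w = wb <;> by_cases hwwz : w = wz
      · -- w = wb = wz : both sides 0... term should be 0
        rw [if_pos hwwb, if_pos hwwz]
        have h1 : ¬ L v b := by rw [hL, hwwb]; exact hwbsep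
        have h2 : ¬ L v z0 := by rw [hL, hwwz]; exact hwzsep
        have hbv : ¬ L b v := fun hc => h1 (linked_symm hc)
        have hbw : L b w := (hdich w hwA b).resolve_left hbv
        have hzw : L z0 w := (hdich w hwA z0).resolve_left (fun hc => h2 (linked_symm hc))
        have hbz : L b z0 := hbw.trans (linked_symm hzw)
        simp only [phi, ← hL]
        rw [if_neg (fun hc => hc.2 hbz), if_neg (fun hc => hc.2 hbz)]
        norm_num
      · -- w = wb ≠ wz : term 1
        rw [if_pos hwwb, if_neg hwwz]
        have h1 : ¬ L v b := by rw [hL, hwwb]; exact hwbsep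
        have hbv : ¬ L b v := fun hc => h1 (linked_symm hc)
        have hvz0 : L v z0 := huniqz _ hwA hwwz
        have hbz : ¬ L b z0 := fun hc => hbv (hc.trans (linked_symm hvz0))
        have hbw : L b w := (hdich w hwA b).resolve_left hbv
        simp only [phi, ← hL]
        rw [if_pos ⟨hbv, hbz⟩, if_neg (fun hc => hc.1 hbw)]
      · -- w = wz ≠ wb : term -1
        rw [if_neg hwwb, if_pos hwwz]
        have h2 : ¬ L v z0 := by rw [hL, hwwz]; exact hwzsep
        have hvb : L v b := huniqb _ hwA hwwb
        have hbv : L b v := linked_symm hvb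
        have hbw : ¬ L b w := fun hc => (hnl w hwA) (hvb.trans hc) |>.elim
        have hbz : ¬ L b z0 := fun hc => h2 (hvb.trans hc) |>.elim
        simp only [phi, ← hL]
        rw [if_neg (fun hc => hc.1 hbv), if_pos ⟨hbw, hbz⟩]
      · -- neither : term 0
        rw [if_neg hwwb, if_neg hwwz]
        have hvb : L v b := huniqb _ hwA hwwb
        have hvz0 : L v z0 := huniqz _ hwA hwwz
        have hbv : L b v := linked_symm hvb
        have hbz : L b z0 := hbv.trans hvz0
        simp only [phi, ← hL]
        rw [if_neg (fun hc => hc.2 hbz), if_neg (fun hc => hc.2 hbz)]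
    rw [Finset.sum_congr rfl hterm, Finset.sum_sub_distrib,
      Finset.sum_ite_eq' A wb (fun _ => (1:ℝ)), Finset.sum_ite_eq' A wz (fun _ => (1:ℝ)),
      if_pos hwbA, if_pos hwzA, sub_self]



def Fv (c : Sym2 V → ℝ) (b z0 : V) (v : V) : ℝ :=
  ∑ B ∈ Finset.univ.filter (IsSF 2), wt c B * phi b z0 B v

theorem key (c : Sym2 V → ℝ) (b z0 v : V) (hv : v ≠ b) (hzb : z0 ≠ b) :
    ∑ w ∈ Finset.univ.filter (· ≠ v), c s(v, w) * (Fv c b z0 v - Fv c b z0 w) =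
      if v = z0 then kappa1 c else 0 := by
  classical
  have h1 : ∀ w : V, c s(v, w) * (Fv c b z0 v - Fv c b z0 w) =
      ∑ B ∈ Finset.univ.filter (IsSF 2),
        c s(v, w) * wt c B * (phi b z0 B v - phi b z0 B w) := by
    intro w
    rw [Fv, Fv, ← Finset.sum_sub_distrib, Finset.mul_sum]
    exact Finset.sum_congr rfl fun B _ => by ring
  have h2 : ∀ w : V, ∑ B ∈ Finset.univ.filter (IsSF 2),
        c s(v, w) * wt c B * (phi b z0 B v - phi b z0 B w) =
      ∑ B ∈ (Finset.univ.filter (IsSF 2)).filter (fun B => ¬ Linked B v w),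
        c s(v, w) * wt c B * (phi b z0 B v - phi b z0 B w) := by
    intro w
    symm
    apply Finset.sum_subset (Finset.filter_subset _ _)
    intro B hB hnB
    have hBL : Linked B v w := by
      by_contra hc
      exact hnB (Finset.mem_filter.mpr ⟨hB, hc⟩)
    have hiff : (¬ Linked B b v ∧ ¬ Linked B b z0) ↔ (¬ Linked B b w ∧ ¬ Linked B b z0) :=
      and_congr_left' (not_congr ⟨fun h => h.trans hBL, fun h => h.trans (linked_symm hBL)⟩)
    have : phi b z0 B v = phi b z0 B w := by
      rw [phi, phi, if_congr hiff rfl rfl]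
    rw [this]
    ring
  have h3 : ∀ w : V, w ≠ v →
      ∑ B ∈ (Finset.univ.filter (IsSF 2)).filter (fun B => ¬ Linked B v w),
        c s(v, w) * wt c B * (phi b z0 B v - phi b z0 B w) =
      ∑ T ∈ (Finset.univ.filter (IsSF 1)).filter (fun T => s(v, w) ∈ T),
        wt c T * (phi b z0 (T.erase s(v, w)) v - phi b z0 (T.erase s(v, w)) w) := by
    intro w hwv
    refine Finset.sum_nbij' (fun B => insert s(v, w) B) (fun T => T.erase s(v, w))
      ?_ ?_ ?_ ?_ ?_
    · intro B hB
      obtain ⟨hB2, hBL⟩ := Finset.mem_filter.mp hB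
      have hB2' : IsSF 2 B := (Finset.mem_filter.mp hB2).2
      refine Finset.mem_filter.mpr ⟨Finset.mem_filter.mpr ⟨Finset.mem_univ _, ?_⟩, ?_⟩
      · exact insert_2sf hB2' hBL
      · exact Finset.mem_insert_self _ _
    · intro T hT
      obtain ⟨hT1, hTe⟩ := Finset.mem_filter.mp hT
      have hT1' : IsSF 1 T := (Finset.mem_filter.mp hT1).2
      obtain ⟨hsf, hnl⟩ := erase_sf hT1' hTe
      exact Finset.mem_filter.mpr ⟨Finset.mem_filter.mpr ⟨Finset.mem_univ _, hsf⟩, hnl⟩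
    · intro B hB
      obtain ⟨_, hBL⟩ := Finset.mem_filter.mp hB
      exact Finset.erase_insert (fun hc => hBL (linked_edge hc))
    · intro T hT
      exact Finset.insert_erase (Finset.mem_filter.mp hT).2
    · intro B hB
      obtain ⟨_, hBL⟩ := Finset.mem_filter.mp hB
      have hne : s(v, w) ∉ B := fun hc => hBL (linked_edge hc)
      rw [Finset.erase_insert hne, wt, wt, Finset.prod_insert hne]
  have h4 : ∑ w ∈ Finset.univ.filter (· ≠ v), c s(v, w) * (Fv c b z0 v - Fv c b z0 w) =
      ∑ w ∈ Finset.univ.filter (· ≠ v),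
        ∑ T ∈ (Finset.univ.filter (IsSF 1)).filter (fun T => s(v, w) ∈ T),
          wt c T * (phi b z0 (T.erase s(v, w)) v - phi b z0 (T.erase s(v, w)) w) := by
    refine Finset.sum_congr rfl fun w hw => ?_
    have hwv : w ≠ v := (Finset.mem_filter.mp hw).2
    rw [h1 w, h2 w, h3 w hwv]
  rw [h4]
  -- swap sums
  have h5 : ∑ w ∈ Finset.univ.filter (· ≠ v),
        ∑ T ∈ (Finset.univ.filter (IsSF 1)).filter (fun T => s(v, w) ∈ T),
          wt c T * (phi b z0 (T.erase s(v, w)) v - phi b z0 (T.erase s(v, w)) w) =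
      ∑ T ∈ Finset.univ.filter (IsSF 1),
        ∑ w ∈ Finset.univ.filter (fun w => w ≠ v ∧ s(v, w) ∈ T),
          wt c T * (phi b z0 (T.erase s(v, w)) v - phi b z0 (T.erase s(v, w)) w) := by
    have hL : ∑ w ∈ Finset.univ.filter (· ≠ v),
        ∑ T ∈ (Finset.univ.filter (IsSF 1)).filter (fun T => s(v, w) ∈ T),
          wt c T * (phi b z0 (T.erase s(v, w)) v - phi b z0 (T.erase s(v, w)) w) =
        ∑ w : V, ∑ T : Finset (Sym2 V),
          if w ≠ v ∧ IsSF 1 T ∧ s(v, w) ∈ T then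
            wt c T * (phi b z0 (T.erase s(v, w)) v - phi b z0 (T.erase s(v, w)) w) else 0 := by
      rw [Finset.sum_filter]
      refine Finset.sum_congr rfl fun w _ => ?_
      by_cases h : w ≠ v
      · rw [if_pos h, Finset.filter_filter, Finset.sum_filter]
        refine Finset.sum_congr rfl fun T _ => ?_
        by_cases h2 : IsSF 1 T ∧ s(v, w) ∈ T
        · rw [if_pos h2, if_pos ⟨h, h2⟩]
        · rw [if_neg h2, if_neg (fun hc => h2 hc.2)]
      · rw [if_neg h]
        symm
        apply Finset.sum_eq_zero
        intro T _
        rw [if_neg (fun hc => h hc.1)]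
    have hR : ∑ T ∈ Finset.univ.filter (IsSF 1),
        ∑ w ∈ Finset.univ.filter (fun w => w ≠ v ∧ s(v, w) ∈ T),
          wt c T * (phi b z0 (T.erase s(v, w)) v - phi b z0 (T.erase s(v, w)) w) =
        ∑ T : Finset (Sym2 V), ∑ w : V,
          if w ≠ v ∧ IsSF 1 T ∧ s(v, w) ∈ T then
            wt c T * (phi b z0 (T.erase s(v, w)) v - phi b z0 (T.erase s(v, w)) w) else 0 := by
      rw [Finset.sum_filter]
      refine Finset.sum_congr rfl fun T _ => ?_
      by_cases h : IsSF 1 T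
      · rw [if_pos h, Finset.sum_filter]
        refine Finset.sum_congr rfl fun w _ => ?_
        by_cases h2 : w ≠ v ∧ s(v, w) ∈ T
        · rw [if_pos h2, if_pos ⟨h2.1, h, h2.2⟩]
        · rw [if_neg h2, if_neg (fun hc => h2 ⟨hc.1, hc.2.2⟩)]
      · rw [if_neg h]
        symm
        apply Finset.sum_eq_zero
        intro w _
        rw [if_neg (fun hc => h hc.2.1)]
    rw [hL, hR, Finset.sum_comm]
  rw [h5]
  have h6 : ∀ T ∈ Finset.univ.filter (IsSF 1),
      ∑ w ∈ Finset.univ.filter (fun w => w ≠ v ∧ s(v, w) ∈ T),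
          wt c T * (phi b z0 (T.erase s(v, w)) v - phi b z0 (T.erase s(v, w)) w) =
        wt c T * (if v = z0 then (1 : ℝ) else 0) := by
    intro T hT
    have hT1 : IsSF 1 T := (Finset.mem_filter.mp hT).2
    rw [← Finset.mul_sum, tree_sum hT1 hv hzb]
  rw [Finset.sum_congr rfl h6]
  by_cases hvz : v = z0
  · simp only [if_pos hvz, mul_one]
    rfl
  · simp only [if_neg hvz, mul_zero, Finset.sum_const_zero]



theorem erase_filter_comm (v b : V) :
    (Finset.univ.filter (· ≠ v)).erase b = (Finset.univ.filter (· ≠ b)).erase v := by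
  ext u
  simp only [Finset.mem_erase, Finset.mem_filter, Finset.mem_univ, true_and]
  tauto

theorem mulVec_formula (c : Sym2 V → ℝ) (b : V) (g : V → ℝ) (hgb : g b = 0)
    (v : V) (hv : v ≠ b) :
    (dlap c b *ᵥ fun q : {w : V // w ≠ b} => g q.1) ⟨v, hv⟩ =
      ∑ w ∈ Finset.univ.filter (· ≠ v), c s(v, w) * (g v - g w) := by
  have hsub : ∀ x : V, x ∈ Finset.univ.filter (· ≠ b) ↔ x ≠ b := by
    intro x; simp
  rw [Matrix.mulVec, dotProduct]
  simp only [dlap, Matrix.of_apply]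
  rw [← Finset.sum_subtype (Finset.univ.filter (· ≠ b)) hsub
    (fun u => lap c v u * g u)]
  have hvmem : v ∈ Finset.univ.filter (· ≠ b) := by simp [hv]
  rw [← Finset.sum_erase_add _ _ hvmem]
  have hdiag : lap c v v * g v = ∑ w ∈ Finset.univ.filter (· ≠ v), c s(v, w) * g v := by
    rw [show lap c v v = ∑ w ∈ Finset.univ.filter (· ≠ v), c s(v, w) from if_pos rfl,
      Finset.sum_mul]
  have hoff : ∑ u ∈ (Finset.univ.filter (· ≠ b)).erase v, lap c v u * g u =
      -∑ w ∈ Finset.univ.filter (· ≠ v), c s(v, w) * g w := by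
    rw [← erase_filter_comm]
    have hbmem : b ∈ Finset.univ.filter (· ≠ v) := by simp [Ne.symm hv]
    rw [← Finset.sum_erase_add (Finset.univ.filter (· ≠ v)) (fun w => c s(v, w) * g w) hbmem,
      hgb, mul_zero, add_zero, ← Finset.sum_neg_distrib]
    refine Finset.sum_congr rfl fun u hu => ?_
    have huv : u ≠ v := (Finset.mem_filter.mp (Finset.mem_of_mem_erase hu)).2
    rw [lap, if_neg (Ne.symm huv)]
    ring
  have hsplit : ∑ w ∈ Finset.univ.filter (· ≠ v), c s(v, w) * (g v - g w) =
      (∑ w ∈ Finset.univ.filter (· ≠ v), c s(v, w) * g v) -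
        ∑ w ∈ Finset.univ.filter (· ≠ v), c s(v, w) * g w := by
    rw [← Finset.sum_sub_distrib]
    exact Finset.sum_congr rfl fun w _ => by ring
  rw [hsplit, hoff, hdiag]
  ring

theorem swap_pairs (F : V → V → ℝ) :
    ∑ v : V, ∑ w ∈ Finset.univ.filter (· ≠ v), F v w =
      ∑ v : V, ∑ w ∈ Finset.univ.filter (· ≠ v), F w v := by
  have h1 : ∀ (G : V → V → ℝ), ∑ v : V, ∑ w ∈ Finset.univ.filter (· ≠ v), G v w =
      ∑ v : V, ∑ w : V, if w ≠ v then G v w else 0 := by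
    intro G
    exact Finset.sum_congr rfl fun v _ => by rw [Finset.sum_filter]
  rw [h1, h1, Finset.sum_comm]
  refine Finset.sum_congr rfl fun v _ => Finset.sum_congr rfl fun w _ => ?_
  by_cases h : w = v
  · subst h; simp
  · rw [if_pos h, if_pos (Ne.symm h)]

theorem dlap_det_ne_zero (c : Sym2 V → ℝ) (hc : ∀ e, 0 ≤ c e)
    (hconn : ncomp (Finset.univ.filter fun e : Sym2 V => c e ≠ 0) = 1) (b : V) :
    (dlap c b).det ≠ 0 := by
  intro h0
  obtain ⟨x, hx0, hx⟩ := (Matrix.exists_mulVec_eq_zero_iff).mpr h0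
  set g : V → ℝ := fun u => if h : u = b then 0 else x ⟨u, h⟩ with hg
  have hgb : g b = 0 := by simp [hg]
  have hgx : (fun q : {w : V // w ≠ b} => g q.1) = x := by
    funext q
    simp only [hg, dif_neg q.2]
  have hzero : ∀ v : V, v ≠ b →
      ∑ w ∈ Finset.univ.filter (· ≠ v), c s(v, w) * (g v - g w) = 0 := by
    intro v hv
    rw [← mulVec_formula c b g hgb v hv, hgx, hx]
    rfl
  -- quadratic form
  have hQ : ∑ v : V, ∑ w ∈ Finset.univ.filter (· ≠ v), c s(v, w) * (g v - g w) * g v = 0 := by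
    apply Finset.sum_eq_zero
    intro v _
    by_cases hv : v = b
    · subst hv
      apply Finset.sum_eq_zero
      intro w _
      rw [hgb]; ring
    · have := hzero v hv
      rw [← Finset.sum_mul, this, zero_mul]
  have hQ2 : ∑ v : V, ∑ w ∈ Finset.univ.filter (· ≠ v), c s(v, w) * (g v - g w) * g w = 0 := by
    have hswap := swap_pairs (fun v w => c s(v, w) * (g v - g w) * g w)
    rw [hswap]
    rw [← neg_eq_zero, ← Finset.sum_neg_distrib]
    rw [← hQ]
    refine Finset.sum_congr rfl fun v _ => ?_
    rw [← Finset.sum_neg_distrib]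
    refine Finset.sum_congr rfl fun w _ => ?_
    rw [Sym2.eq_swap]
    ring
  have hQ' : ∑ v : V, ∑ w ∈ Finset.univ.filter (· ≠ v), c s(v, w) * (g v - g w) ^ 2 = 0 := by
    have : ∀ v : V, ∀ w : V, c s(v, w) * (g v - g w) ^ 2 =
        c s(v, w) * (g v - g w) * g v - c s(v, w) * (g v - g w) * g w := by
      intro v w; ring
    calc ∑ v : V, ∑ w ∈ Finset.univ.filter (· ≠ v), c s(v, w) * (g v - g w) ^ 2
        = (∑ v : V, ∑ w ∈ Finset.univ.filter (· ≠ v), c s(v, w) * (g v - g w) * g v) -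
          ∑ v : V, ∑ w ∈ Finset.univ.filter (· ≠ v), c s(v, w) * (g v - g w) * g w := by
          rw [← Finset.sum_sub_distrib]
          refine Finset.sum_congr rfl fun v _ => ?_
          rw [← Finset.sum_sub_distrib]
          exact Finset.sum_congr rfl fun w _ => this v w
      _ = 0 := by rw [hQ, hQ2, sub_zero]
  have hterm : ∀ v : V, ∀ w : V, w ≠ v → c s(v, w) * (g v - g w) ^ 2 = 0 := by
    have houter := (Finset.sum_eq_zero_iff_of_nonneg ?_).mp hQ'
    · intro v w hw
      have hinner := (Finset.sum_eq_zero_iff_of_nonneg ?_).mp (houter v (Finset.mem_univ v))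
      · exact hinner w (by simp [hw])
      · intro w _
        exact mul_nonneg (hc _) (sq_nonneg _)
    · intro v _
      apply Finset.sum_nonneg
      intro w _
      exact mul_nonneg (hc _) (sq_nonneg _)
  have hgzero : ∀ u : V, Linked (Finset.univ.filter fun e : Sym2 V => c e ≠ 0) b u → g u = 0 := by
    intro u hu
    induction hu with
    | refl => exact hgb
    | @tail m u' hbm hstep ih =>
      by_cases hmu : u' = m
      · subst hmu; exact ih
      · have hcne : c s(m, u') ≠ 0 := by
          have := Finset.mem_filter.mp hstep
          exact this.2
        have := hterm m u' hmu
        have hsq : (g m - g u') ^ 2 = 0 := by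
          rcases mul_eq_zero.mp this with h | h
          · exact absurd h hcne
          · exact h
        have : g m = g u' := by
          have := pow_eq_zero_iff (n := 2) (by norm_num) |>.mp hsq
          linarith [sub_eq_zero.mp this]
        rw [← this, ih]
  have : x = 0 := by
    funext p
    have := hgzero p.1 (linked_of_ncomp_one hconn b p.1)
    rw [← hgx]
    simpa using this
  exact hx0 this

theorem Fv_b_eq_zero (c : Sym2 V → ℝ) (b z0 : V) : Fv c b z0 b = 0 := by
  rw [Fv]
  apply Finset.sum_eq_zero
  intro B _
  rw [phi, if_neg (fun hcon => hcon.1 (linked_refl B b)), mul_zero]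

theorem Fv_eq_green (c : Sym2 V → ℝ) (hc : ∀ e, 0 ≤ c e)
    (hconn : ncomp (Finset.univ.filter fun e : Sym2 V => c e ≠ 0) = 1) (b z0 : V)
    (hzb : z0 ≠ b) (v : V) : Fv c b z0 v = kappa1 c * green c b v z0 := by
  by_cases hv : v = b
  · subst hv
    rw [Fv_b_eq_zero, green, dif_pos rfl, mul_zero]
  · set x : {w : V // w ≠ b} → ℝ := fun q => Fv c b z0 q.1 with hxdef
    have hmul : dlap c b *ᵥ x = fun p : {w : V // w ≠ b} =>
        if p.1 = z0 then kappa1 c else 0 := by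
      funext p
      obtain ⟨p1, hp1⟩ := p
      rw [show x = (fun q : {w : V // w ≠ b} => Fv c b z0 q.1) from rfl]
      rw [mulVec_formula c b (Fv c b z0) (Fv_b_eq_zero c b z0) p1 hp1]
      exact key c b z0 p1 hp1 hzb
    have hdet : IsUnit (dlap c b).det :=
      isUnit_iff_ne_zero.mpr (dlap_det_ne_zero c hc hconn b)
    have hxinv : x = (dlap c b)⁻¹ *ᵥ (dlap c b *ᵥ x) := by
      rw [Matrix.mulVec_mulVec, Matrix.nonsing_inv_mul _ hdet, Matrix.one_mulVec]
    have hres : x ⟨v, hv⟩ = kappa1 c * (dlap c b)⁻¹ ⟨v, hv⟩ ⟨z0, hzb⟩ := by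
      rw [hxinv, hmul]
      rw [Matrix.mulVec, dotProduct]
      have : ∀ q : {w : V // w ≠ b},
          (dlap c b)⁻¹ ⟨v, hv⟩ q * (if q.1 = z0 then kappa1 c else 0) =
          if q = ⟨z0, hzb⟩ then (dlap c b)⁻¹ ⟨v, hv⟩ q * kappa1 c else 0 := by
        intro q
        by_cases hq : q = ⟨z0, hzb⟩
        · subst hq
          rw [if_pos rfl, if_pos rfl]
        · rw [if_neg hq, if_neg (fun hc' => hq (Subtype.ext hc')), mul_zero]
      rw [Finset.sum_congr rfl (fun q _ => this q)]
      rw [Finset.sum_ite_eq' Finset.univ (⟨z0, hzb⟩ : {w : V // w ≠ b})]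
      rw [if_pos (Finset.mem_univ _)]
      ring
    rw [show Fv c b z0 v = x ⟨v, hv⟩ from rfl, hres, green, dif_neg hv, dif_neg hzb]



theorem statement_10' (c : Sym2 V → ℝ)
    (hc : ∀ e, 0 ≤ c e) (hloop : ∀ v : V, c s(v, v) = 0)
    (hconn : ncomp (Finset.univ.filter fun e : Sym2 V => c e ≠ 0) = 1)
    (b z0 : V) (hz : z0 ≠ b) :
    (∑ B ∈ Finset.univ.filter (fun B => IsSF 2 B ∧ z0 ∈ floating b B),
        wt c B * ((floating b B).card : ℝ)) /
      (∑ B ∈ Finset.univ.filter (fun B => IsSF 2 B ∧ z0 ∈ floating b B), wt c B) =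
      (∑ v : V, green c b v z0) / green c b z0 z0 := by
  classical
  have hmemfl : ∀ (B : Finset (Sym2 V)) (v : V), v ∈ floating b B ↔ ¬ Linked B b v := by
    intro B v; simp [floating]
  -- denominator
  have hD : (∑ B ∈ Finset.univ.filter (fun B => IsSF 2 B ∧ z0 ∈ floating b B), wt c B) =
      Fv c b z0 z0 := by
    rw [Fv, Finset.sum_filter, Finset.sum_filter]
    refine Finset.sum_congr rfl fun B _ => ?_
    by_cases h1 : IsSF 2 B
    · by_cases h2 : ¬ Linked B b z0
      · rw [if_pos ⟨h1, (hmemfl B z0).mpr h2⟩, if_pos h1, phi, if_pos ⟨h2, h2⟩, mul_one]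
      · rw [if_neg (fun hcon => h2 ((hmemfl B z0).mp hcon.2)), if_pos h1, phi,
          if_neg (fun hcon => h2 hcon.1), mul_zero]
    · rw [if_neg (fun hcon => h1 hcon.1), if_neg h1]
  -- numerator
  have hcard : ∀ B : Finset (Sym2 V), ((floating b B).card : ℝ) =
      ∑ v : V, if ¬ Linked B b v then (1 : ℝ) else 0 := by
    intro B
    rw [floating, Finset.card_filter]
    push_cast
    refine Finset.sum_congr rfl fun v _ => ?_
    by_cases h : ¬ Linked B b v <;> simp [h]
  have hN : (∑ B ∈ Finset.univ.filter (fun B => IsSF 2 B ∧ z0 ∈ floating b B),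
      wt c B * ((floating b B).card : ℝ)) = ∑ v : V, Fv c b z0 v := by
    have h1 : ∀ B ∈ Finset.univ.filter (fun B => IsSF 2 B ∧ z0 ∈ floating b B),
        wt c B * ((floating b B).card : ℝ) =
        ∑ v : V, wt c B * (if ¬ Linked B b v then (1 : ℝ) else 0) := by
      intro B _
      rw [hcard B, Finset.mul_sum]
    rw [Finset.sum_congr rfl h1, Finset.sum_comm]
    refine Finset.sum_congr rfl fun v _ => ?_
    rw [Fv, Finset.sum_filter, Finset.sum_filter]
    refine Finset.sum_congr rfl fun B _ => ?_
    by_cases h1 : IsSF 2 B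
    · by_cases h2 : ¬ Linked B b z0
      · rw [if_pos ⟨h1, (hmemfl B z0).mpr h2⟩, if_pos h1, phi]
        by_cases h3 : ¬ Linked B b v
        · rw [if_pos h3, if_pos ⟨h3, h2⟩]
        · rw [if_neg h3, if_neg (fun hcon => h3 hcon.1)]
      · rw [if_neg (fun hcon => h2 ((hmemfl B z0).mp hcon.2)), if_pos h1, phi,
          if_neg (fun hcon => h2 hcon.2), mul_zero]
    · rw [if_neg (fun hcon => h1 hcon.1), if_neg h1]
  -- spanning tree of the support
  obtain ⟨T₀, hT₀sub, hT₀count, hT₀iff⟩ :=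
    subforest (Finset.univ.filter fun e : Sym2 V => c e ≠ 0)
  have hT₀n : ncomp T₀ = 1 := by rw [ncomp_congr hT₀iff, hconn]
  have hT₀ : IsSF 1 T₀ := ⟨hT₀n, by omega⟩
  have hwtpos : ∀ B : Finset (Sym2 V), B ⊆ T₀ → 0 < wt c B := by
    intro B hB
    apply Finset.prod_pos
    intro e he
    have : c e ≠ 0 := (Finset.mem_filter.mp (hT₀sub (hB he))).2
    exact lt_of_le_of_ne (hc e) (Ne.symm this)
  have hwtnonneg : ∀ B : Finset (Sym2 V), 0 ≤ wt c B := by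
    intro B
    exact Finset.prod_nonneg fun e _ => hc e
  have hkpos : 0 < kappa1 c := by
    apply Finset.sum_pos'
    · intro B _; exact hwtnonneg B
    · exact ⟨T₀, Finset.mem_filter.mpr ⟨Finset.mem_univ _, hT₀⟩,
        hwtpos T₀ (Finset.Subset.refl _)⟩
  -- positive 2SF with z0 floating
  have hT₀forest : T₀.card + ncomp T₀ = Fintype.card V := hT₀count
  obtain ⟨w, hwT, hsep⟩ := sep_exists T₀.card T₀ rfl hT₀forest
    (linked_of_ncomp_one hT₀n z0 b) hz
  have hB₀ : IsSF 2 (T₀.erase s(z0, w)) := (erase_sf hT₀ hwT).1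
  have hB₀fl : z0 ∈ floating b (T₀.erase s(z0, w)) :=
    (hmemfl _ z0).mpr (fun h => hsep (linked_symm h))
  have hDpos : 0 < ∑ B ∈ Finset.univ.filter
      (fun B => IsSF 2 B ∧ z0 ∈ floating b B), wt c B := by
    apply Finset.sum_pos'
    · intro B _; exact hwtnonneg B
    · exact ⟨T₀.erase s(z0, w), Finset.mem_filter.mpr ⟨Finset.mem_univ _, hB₀, hB₀fl⟩,
        hwtpos _ (Finset.erase_subset _ _)⟩
  -- put it together
  have hFg : ∀ v : V, Fv c b z0 v = kappa1 c * green c b v z0 :=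
    Fv_eq_green c hc hconn b z0 hz
  have hgz : green c b z0 z0 ≠ 0 := by
    intro h
    rw [hD, hFg z0, h, mul_zero] at hDpos
    exact lt_irrefl 0 hDpos
  rw [hN, hD, hFg z0]
  have hS : ∑ v : V, Fv c b z0 v = kappa1 c * ∑ v : V, green c b v z0 := by
    rw [Finset.mul_sum]
    exact Finset.sum_congr rfl fun v _ => hFg v
  rw [hS]
  exact mul_div_mul_left _ _ (ne_of_gt hkpos)


end SFProof

end TwoSF

open TwoSF

/-- For a finite connected undirected graph with positive
conductances and marked vertex `b`, and a vertex `z₀ ≠ b`, the expected number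
of vertices of the floating component `Σ`, conditioned on `z₀ ∈ Σ`, under the
weight-proportional measure on two-component spanning forests, equals
`Σ_v G_{v,z₀} / G_{z₀,z₀}`. -/
theorem statement_10 {V : Type*} [Fintype V] [DecidableEq V] (c : Sym2 V → ℝ)
    (hc : ∀ e, 0 ≤ c e) (hloop : ∀ v : V, c s(v, v) = 0)
    (hconn : ncomp (Finset.univ.filter fun e : Sym2 V => c e ≠ 0) = 1)
    (b z0 : V) (hz : z0 ≠ b) :
    (∑ B ∈ Finset.univ.filter (fun B => IsSF 2 B ∧ z0 ∈ floating b B),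
        wt c B * ((floating b B).card : ℝ)) /
      (∑ B ∈ Finset.univ.filter (fun B => IsSF 2 B ∧ z0 ∈ floating b B), wt c B) =
      (∑ v : V, green c b v z0) / green c b z0 z0 :=
  TwoSF.SFProof.statement_10' c hc hloop hconn b z0 hz
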